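/- Let T be a balanced tree with k levels (k ≥ 2) and L its graph Laplacian. Then every eigenvalue of the matrix T^{(0)} is an eigenvalue of L. -/

import Mathlib

open scoped Classical

/-- Vertices of the balanced tree with `k` levels and branching sequence `c`:
a vertex at level `l` (`0 ≤ l ≤ k-1`) is a function assigning to each `i < l` a
label in `Fin (c i)` (the label of the level-`(i+1)` ancestor among its siblings). -/
abbrev BTVert (k : ℕ) (c : ℕ → ℕ) : Type := Σ l : Fin k, ∀ i : Fin l.val, Fin (c i.val)

/-- `p` is the parent of `v` in the balanced tree. -/
def IsParentOf {k : ℕ} {c : ℕ → ℕ} (p v : BTVert k c) : Prop :=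
  ∃ h : p.1.val + 1 = v.1.val,
    ∀ i : Fin p.1.val, v.2 ⟨i.val, by have := i.isLt; omega⟩ = p.2 i

/-- The balanced tree as a simple graph: each non-root vertex is adjacent to its parent. -/
def btGraph (k : ℕ) (c : ℕ → ℕ) : SimpleGraph (BTVert k c) where
  Adj u v := IsParentOf u v ∨ IsParentOf v u
  symm := ⟨fun u v h => h.symm⟩
  loopless := ⟨fun v h => by
    rcases h with ⟨h, -⟩ | ⟨h, -⟩ <;> omega⟩

/-- The root (the unique vertex at level 0). -/
def btRoot (k : ℕ) (c : ℕ → ℕ) (hk : 0 < k) : BTVert k c :=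
  ⟨⟨0, hk⟩, fun i => i.elim0⟩

/-- `u` belongs to the maximal subtree rooted at `v` (`u` is `v` or a descendant of `v`). -/
def InSubtree {k : ℕ} {c : ℕ → ℕ} (v u : BTVert k c) : Prop :=
  ∃ h : v.1.val ≤ u.1.val,
    ∀ i : Fin v.1.val, u.2 ⟨i.val, by have := i.isLt; omega⟩ = v.2 i

/-- A function on the vertices is stratified if it only depends on the level. -/
def Stratified {k : ℕ} {c : ℕ → ℕ} (f : BTVert k c → ℝ) : Prop :=
  ∀ u v : BTVert k c, u.1 = v.1 → f u = f v

/-- Number of vertices at level `l`: `n(l) = c(0) ⋯ c(l-1)`. -/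
def nlev (c : ℕ → ℕ) (l : ℕ) : ℕ := ∏ i ∈ Finset.range l, c i

/-- The common degree `d(l)` of the vertices at level `l`. -/
def branchDeg (k : ℕ) (c : ℕ → ℕ) (l : ℕ) : ℕ :=
  if l = 0 then c 0 else if l = k - 1 then 1 else c l + 1

/-- The symmetric tridiagonal matrix `T^{(l0)}` with diagonal `d(l0), …, d(k-1)` and
off-diagonal `√c(l0), …, √c(k-2)`. -/
noncomputable def matT (k : ℕ) (c : ℕ → ℕ) (l0 : ℕ) :
    Matrix (Fin (k - l0)) (Fin (k - l0)) ℝ := fun i j =>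
  if i = j then (branchDeg k c (l0 + i.val) : ℝ)
  else if i.val + 1 = j.val then Real.sqrt (c (l0 + i.val))
  else if j.val + 1 = i.val then Real.sqrt (c (l0 + j.val))
  else 0

/-- The tridiagonal matrix `S^{(l0)}` with diagonal `d(l0), …, d(k-1)`, subdiagonal
entries `-1` and superdiagonal entries `-c(l0), …, -c(k-2)`. -/
def matS (k : ℕ) (c : ℕ → ℕ) (l0 : ℕ) :
    Matrix (Fin (k - l0)) (Fin (k - l0)) ℝ := fun i j =>
  if i = j then (branchDeg k c (l0 + i.val) : ℝ)
  else if i.val + 1 = j.val then -(c (l0 + i.val) : ℝ)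
  else if j.val + 1 = i.val then -1
  else 0

/-- `lam` is an eigenvalue of the matrix `A`. -/
def IsEigenvalue {V : Type*} [Fintype V] (A : Matrix V V ℝ) (lam : ℝ) : Prop :=
  ∃ f : V → ℝ, f ≠ 0 ∧ A.mulVec f = lam • f

/-- The (geometric) multiplicity of `lam` as an eigenvalue of `A`. -/
noncomputable def eigMult {V : Type*} [Fintype V] (A : Matrix V V ℝ) (lam : ℝ) : ℕ :=
  Module.finrank ℝ
    ↥(LinearMap.ker (A.mulVecLin - lam • (LinearMap.id : (V → ℝ) →ₗ[ℝ] (V → ℝ))))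

/-- The Dirichlet Laplacian on a subset `Ω` of the vertices of the balanced tree:
the principal submatrix of the Laplacian with rows and columns indexed by `Ω`. -/
noncomputable def dirichletLap (k : ℕ) (c : ℕ → ℕ) (Ω : Set (BTVert k c)) :
    Matrix Ω Ω ℝ := fun u v => (btGraph k c).lapMatrix ℝ u.1 v.1


section RojoAux
variable {k : ℕ} {c : ℕ → ℕ}

lemma btvert_ext (u w : BTVert k c) (h : u.1 = w.1)
    (h2 : ∀ i : Fin u.1.val, u.2 i = w.2 ⟨i.val, by rw [← h]; exact i.isLt⟩) : u = w := by
  obtain ⟨lu, au⟩ := u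
  obtain ⟨lw, aw⟩ := w
  cases h
  simp only [Sigma.mk.inj_iff, heq_eq_eq, true_and]
  funext i
  exact h2 i

def parentV (v : BTVert k c) (h : 0 < v.1.val) : BTVert k c :=
  ⟨⟨v.1.val - 1, Nat.lt_of_le_of_lt (Nat.sub_le _ _) v.1.isLt⟩,
   fun i => v.2 ⟨i.val, Nat.lt_of_lt_of_le i.isLt (Nat.sub_le _ _)⟩⟩

def childV (v : BTVert k c) (h : v.1.val + 1 < k) (a : Fin (c v.1.val)) : BTVert k c :=
  ⟨⟨v.1.val + 1, h⟩, fun i =>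
    if hi : i.val < v.1.val then v.2 ⟨i.val, hi⟩
    else Fin.cast (congrArg c (Nat.le_antisymm (Nat.not_lt.mp hi) (Nat.lt_succ_iff.mp i.isLt))) a⟩

lemma parentV_fst (v : BTVert k c) (h : 0 < v.1.val) : (parentV v h).1.val = v.1.val - 1 := rfl

lemma childV_fst (v : BTVert k c) (h : v.1.val + 1 < k) (a : Fin (c v.1.val)) :
    (childV v h a).1.val = v.1.val + 1 := rfl

lemma childV_snd_lt (v : BTVert k c) (h : v.1.val + 1 < k) (a : Fin (c v.1.val))
    {iv : ℕ} (hiv : iv < (childV v h a).1.val) (hi : iv < v.1.val) :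
    (childV v h a).2 ⟨iv, hiv⟩ = v.2 ⟨iv, hi⟩ := by
  simp only [childV]
  rw [dif_pos hi]

lemma childV_snd_ge (v : BTVert k c) (h : v.1.val + 1 < k) (a : Fin (c v.1.val))
    {iv : ℕ} (hiv : iv < (childV v h a).1.val) (hi : ¬ iv < v.1.val) :
    (childV v h a).2 ⟨iv, hiv⟩
      = Fin.cast (congrArg c (Nat.le_antisymm (Nat.not_lt.mp hi) (Nat.lt_succ_iff.mp hiv))) a := by
  simp only [childV]
  rw [dif_neg hi]

lemma isParentOf_parentV (v : BTVert k c) (h : 0 < v.1.val) : IsParentOf (parentV v h) v :=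
  ⟨Nat.succ_pred_eq_of_pos h, fun _ => rfl⟩

lemma eq_parentV {u v : BTVert k c} (hp : IsParentOf u v) (h : 0 < v.1.val) :
    u = parentV v h := by
  obtain ⟨he, ha⟩ := hp
  refine btvert_ext _ _ (Fin.ext ?_) (fun i => ?_)
  · show u.1.val = v.1.val - 1; omega
  · exact (ha i).symm

lemma isParentOf_childV (v : BTVert k c) (h : v.1.val + 1 < k) (a : Fin (c v.1.val)) :
    IsParentOf v (childV v h a) :=
  ⟨rfl, fun i => childV_snd_lt v h a (Nat.lt_succ_of_lt i.isLt) i.isLt⟩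

lemma eq_childV {u v : BTVert k c} (hp : IsParentOf v u) :
    ∃ (h : v.1.val + 1 < k), ∃ a, u = childV v h a := by
  obtain ⟨he, ha⟩ := hp
  have hk : v.1.val + 1 < k := he ▸ u.1.isLt
  have hvu : v.1.val < u.1.val := by omega
  refine ⟨hk, u.2 ⟨v.1.val, hvu⟩, ?_⟩
  refine btvert_ext _ _ (Fin.ext ?_) (fun i => ?_)
  · show u.1.val = v.1.val + 1; omega
  · by_cases hi : i.val < v.1.val
    · rw [childV_snd_lt v hk _ _ hi]
      exact ha ⟨i.val, hi⟩
    · rw [childV_snd_ge v hk _ _ hi]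
      have hieq : (⟨v.1.val, hvu⟩ : Fin u.1.val) = i := by
        refine Fin.ext ?_
        have := i.isLt
        simp only []
        omega
      refine Fin.ext ?_
      rw [Fin.coe_cast]
      exact (congrArg (fun j => (u.snd j).val) hieq).symm

lemma childV_injective (v : BTVert k c) (h : v.1.val + 1 < k) :
    Function.Injective (childV v h) := by
  intro a b e
  have ha' : v.1.val < (childV v h a).1.val := Nat.lt_succ_self _
  have hb' : v.1.val < (childV v h b).1.val := Nat.lt_succ_self _
  have h3 := congrArg
    (fun u : BTVert k c => if hu : v.1.val < u.1.val then (u.2 ⟨v.1.val, hu⟩).val else 0) e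
  simp only at h3
  rw [dif_pos ha', dif_pos hb'] at h3
  rw [congrArg Fin.val (childV_snd_ge v h a ha' (lt_irrefl _)),
      congrArg Fin.val (childV_snd_ge v h b hb' (lt_irrefl _))] at h3
  simp only [Fin.coe_cast] at h3
  exact Fin.ext h3

lemma neighborFinset_eq (v : BTVert k c) :
    (btGraph k c).neighborFinset v
      = (Finset.univ.filter fun u => IsParentOf u v)
        ∪ (Finset.univ.filter fun u => IsParentOf v u) := by
  ext u
  simp only [SimpleGraph.mem_neighborFinset, Finset.mem_union, Finset.mem_filter,
    Finset.mem_univ, true_and]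
  show IsParentOf v u ∨ IsParentOf u v ↔ _
  tauto

lemma disj_pc (v : BTVert k c) :
    Disjoint (Finset.univ.filter fun u => IsParentOf u v)
      (Finset.univ.filter fun u => IsParentOf v u) := by
  rw [Finset.disjoint_left]
  intro u hu1 hu2
  simp only [Finset.mem_filter, Finset.mem_univ, true_and] at hu1 hu2
  obtain ⟨h1, -⟩ := hu1
  obtain ⟨h2, -⟩ := hu2
  omega

lemma parent_filter_pos (v : BTVert k c) (h : 0 < v.1.val) :
    (Finset.univ.filter fun u => IsParentOf u v) = {parentV v h} := by
  ext u
  simp only [Finset.mem_filter, Finset.mem_univ, true_and, Finset.mem_singleton]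
  constructor
  · exact fun hp => eq_parentV hp h
  · rintro rfl; exact isParentOf_parentV v h

lemma parent_filter_zero (v : BTVert k c) (h : ¬ 0 < v.1.val) :
    (Finset.univ.filter fun u => IsParentOf u v) = ∅ := by
  ext u
  simp only [Finset.mem_filter, Finset.mem_univ, true_and, Finset.notMem_empty, iff_false]
  rintro ⟨he, -⟩
  omega

lemma child_filter_pos (v : BTVert k c) (h : v.1.val + 1 < k) :
    (Finset.univ.filter fun u => IsParentOf v u) = Finset.univ.image (childV v h) := by
  ext u
  simp only [Finset.mem_filter, Finset.mem_univ, true_and, Finset.mem_image]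
  constructor
  · intro hp
    obtain ⟨h', a, rfl⟩ := eq_childV hp
    exact ⟨a, rfl⟩
  · rintro ⟨a, rfl⟩
    exact isParentOf_childV v h a

lemma child_filter_top (v : BTVert k c) (h : ¬ v.1.val + 1 < k) :
    (Finset.univ.filter fun u => IsParentOf v u) = ∅ := by
  ext u
  simp only [Finset.mem_filter, Finset.mem_univ, true_and, Finset.notMem_empty, iff_false]
  intro hp
  obtain ⟨h', -, -⟩ := eq_childV hp
  exact h h'

end RojoAux

/-- every eigenvalue of `T^{(0)}` is an eigenvalue of the Laplacian of the
balanced tree. -/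
theorem rojo_full_matrix_eigenvalues (k : ℕ) (hk : 2 ≤ k) (c : ℕ → ℕ)
    (hc : ∀ l, l ≤ k - 2 → 1 ≤ c l) (lam : ℝ)
    (hlam : IsEigenvalue (matT k c 0) lam) :
    IsEigenvalue ((btGraph k c).lapMatrix ℝ) lam := by
  classical
  obtain ⟨f, hf0, hf⟩ := hlam
  set fN : ℕ → ℝ := fun m => if h : m < k then f ⟨m, h⟩ else 0 with hfNdef
  set gN : ℕ → ℝ := fun m => (-1) ^ m * fN m / Real.sqrt (nlev c m) with hgNdef
  have hfN : ∀ m (hm : m < k), fN m = f ⟨m, hm⟩ := fun m hm => dif_pos hm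
  have hgN : ∀ m, gN m = (-1) ^ m * fN m / Real.sqrt (nlev c m) := fun m => rfl
  have hnl : ∀ m, m < k → (0 : ℝ) < Real.sqrt (nlev c m) := by
    intro m hm
    apply Real.sqrt_pos.mpr
    have hpos : 0 < nlev c m := Finset.prod_pos (fun i hi => by
      have hi' := Finset.mem_range.mp hi
      exact hc i (by omega))
    exact_mod_cast hpos
  have hsucc : ∀ m, ((nlev c (m + 1) : ℕ) : ℝ) = (nlev c m : ℝ) * (c m : ℝ) := by
    intro m
    unfold nlev
    rw [Finset.prod_range_succ]
    push_cast
    ring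
  -- the scalar eigen-equations of T
  have teq : ∀ l (hl : l < k),
      (branchDeg k c l : ℝ) * fN l
        + (if l + 1 < k then Real.sqrt (c l) * fN (l + 1) else 0)
        + (if 0 < l then Real.sqrt (c (l - 1)) * fN (l - 1) else 0)
        = lam * fN l := by
    intro l hl
    have h0 := congrFun hf (⟨l, hl⟩ : Fin (k - 0))
    simp only [Matrix.mulVec, dotProduct, Pi.smul_apply, smul_eq_mul] at h0
    have hsplit : ∀ j : Fin (k - 0), matT k c 0 ⟨l, hl⟩ j * f j =
        (if (⟨l, hl⟩ : Fin (k - 0)) = j then (branchDeg k c l : ℝ) * f j else 0)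
        + (if l + 1 = j.val then Real.sqrt (c l) * f j else 0)
        + (if j.val + 1 = l then Real.sqrt (c j.val) * f j else 0) := by
      intro j
      obtain ⟨jv, hjv⟩ := j
      simp only [matT, Fin.mk.injEq, zero_add]
      split_ifs <;> first | ring1 | (exfalso; omega)
    rw [Finset.sum_congr rfl (fun j _ => hsplit j)] at h0
    rw [Finset.sum_add_distrib, Finset.sum_add_distrib, Finset.sum_ite_eq] at h0
    simp only [Finset.mem_univ, if_true] at h0
    have hsum2 : (∑ j : Fin (k - 0), if l + 1 = j.val then Real.sqrt (c l) * f j else 0)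
        = (if l + 1 < k then Real.sqrt (c l) * fN (l + 1) else 0) := by
      by_cases h2 : l + 1 < k
      · rw [if_pos h2,
          Finset.sum_eq_single_of_mem (⟨l + 1, h2⟩ : Fin (k - 0)) (Finset.mem_univ _)
            (fun j _ hj => if_neg (fun he => hj (Fin.ext he.symm))),
          if_pos (show l + 1 = ((⟨l + 1, h2⟩ : Fin (k - 0)) : ℕ) from rfl), hfN (l + 1) h2]
      · rw [if_neg h2]
        apply Finset.sum_eq_zero
        intro j _
        rw [if_neg]
        have := j.isLt
        omega
    have hsum3 : (∑ j : Fin (k - 0), if j.val + 1 = l then Real.sqrt (c j.val) * f j else 0)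
        = (if 0 < l then Real.sqrt (c (l - 1)) * fN (l - 1) else 0) := by
      by_cases h3 : 0 < l
      · have hlt : l - 1 < k - 0 := by omega
        rw [if_pos h3,
          Finset.sum_eq_single_of_mem (⟨l - 1, hlt⟩ : Fin (k - 0)) (Finset.mem_univ _)
            (fun j _ hj => if_neg (fun he => hj (Fin.ext (show j.val = l - 1 by omega)))),
          if_pos (show ((⟨l - 1, hlt⟩ : Fin (k - 0)) : ℕ) + 1 = l from Nat.succ_pred_eq_of_pos h3),
          hfN (l - 1) hlt]
      · rw [if_neg h3]
        apply Finset.sum_eq_zero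
        intro j _
        rw [if_neg]
        omega
    rw [hsum2, hsum3] at h0
    rw [hfN l hl]
    exact h0
  -- the transformed (stratified) eigen-equations
  have geq : ∀ l, l < k →
      (branchDeg k c l : ℝ) * gN l - (if 0 < l then gN (l - 1) else 0)
        - (if l + 1 < k then (c l : ℝ) * gN (l + 1) else 0) = lam * gN l := by
    intro l hl
    have key : ∀ m, m < k → fN m = (-1 : ℝ) ^ m * Real.sqrt (nlev c m) * gN m := by
      intro m hm
      have hs := (hnl m hm).ne'
      have hp : (-1 : ℝ) ^ m * (-1) ^ m = 1 := by
        rw [← pow_add, ← two_mul, pow_mul]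
        norm_num
      have hcalc : (-1 : ℝ) ^ m * Real.sqrt (nlev c m)
            * ((-1) ^ m * fN m / Real.sqrt (nlev c m))
          = ((-1) ^ m * (-1) ^ m) * fN m
            * (Real.sqrt (nlev c m) / Real.sqrt (nlev c m)) := by ring
      rw [hgN m, hcalc, hp, div_self hs, one_mul, mul_one]
    have t := teq l hl
    rw [key l hl] at t
    have hB2 : Real.sqrt (c l) * Real.sqrt (c l) = (c l : ℝ) :=
      Real.mul_self_sqrt (by positivity)
    by_cases h1 : l + 1 < k <;> by_cases h0 : 0 < l
    · -- middle levels
      rw [if_pos h1, if_pos h0, key (l + 1) h1, key (l - 1) (by omega), pow_succ] at t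
      rw [if_pos h0, if_pos h1]
      have hA : Real.sqrt (nlev c l)
          = Real.sqrt (nlev c (l - 1)) * Real.sqrt (c (l - 1)) := by
        have hnn : ((nlev c l : ℕ) : ℝ) = (nlev c (l - 1) : ℝ) * (c (l - 1) : ℝ) := by
          have h := hsucc (l - 1)
          rw [show l - 1 + 1 = l from by omega] at h
          exact h
        rw [hnn, Real.sqrt_mul (by positivity)]
      have hB : Real.sqrt (nlev c (l + 1)) = Real.sqrt (nlev c l) * Real.sqrt (c l) := by
        rw [hsucc l, Real.sqrt_mul (by positivity)]
      have hps : (-1 : ℝ) ^ (l - 1) * (-1) = (-1) ^ l := by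
        rw [← pow_succ, show l - 1 + 1 = l from by omega]
      have hcanc : ((-1 : ℝ) ^ l * Real.sqrt (nlev c l)) ≠ 0 :=
        mul_ne_zero (pow_ne_zero _ (by norm_num)) (hnl l hl).ne'
      refine mul_left_cancel₀ hcanc ?_
      linear_combination t - ((-1 : ℝ) ^ l * gN (l - 1)) * hA
        + (Real.sqrt (c (l - 1)) * Real.sqrt (nlev c (l - 1)) * gN (l - 1)) * hps
        + ((-1 : ℝ) ^ l * gN (l + 1) * Real.sqrt (c l)) * hB
        + ((-1 : ℝ) ^ l * gN (l + 1) * Real.sqrt (nlev c l)) * hB2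
    · -- the root
      rw [if_pos h1, if_neg h0, key (l + 1) h1, pow_succ] at t
      rw [if_neg h0, if_pos h1]
      have hB : Real.sqrt (nlev c (l + 1)) = Real.sqrt (nlev c l) * Real.sqrt (c l) := by
        rw [hsucc l, Real.sqrt_mul (by positivity)]
      have hcanc : ((-1 : ℝ) ^ l * Real.sqrt (nlev c l)) ≠ 0 :=
        mul_ne_zero (pow_ne_zero _ (by norm_num)) (hnl l hl).ne'
      refine mul_left_cancel₀ hcanc ?_
      linear_combination t + ((-1 : ℝ) ^ l * gN (l + 1) * Real.sqrt (c l)) * hB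
        + ((-1 : ℝ) ^ l * gN (l + 1) * Real.sqrt (nlev c l)) * hB2
    · -- the leaves
      rw [if_neg h1, if_pos h0, key (l - 1) (by omega)] at t
      rw [if_pos h0, if_neg h1]
      have hA : Real.sqrt (nlev c l)
          = Real.sqrt (nlev c (l - 1)) * Real.sqrt (c (l - 1)) := by
        have hnn : ((nlev c l : ℕ) : ℝ) = (nlev c (l - 1) : ℝ) * (c (l - 1) : ℝ) := by
          have h := hsucc (l - 1)
          rw [show l - 1 + 1 = l from by omega] at h
          exact h
        rw [hnn, Real.sqrt_mul (by positivity)]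
      have hps : (-1 : ℝ) ^ (l - 1) * (-1) = (-1) ^ l := by
        rw [← pow_succ, show l - 1 + 1 = l from by omega]
      have hcanc : ((-1 : ℝ) ^ l * Real.sqrt (nlev c l)) ≠ 0 :=
        mul_ne_zero (pow_ne_zero _ (by norm_num)) (hnl l hl).ne'
      refine mul_left_cancel₀ hcanc ?_
      linear_combination t - ((-1 : ℝ) ^ l * gN (l - 1)) * hA
        + (Real.sqrt (c (l - 1)) * Real.sqrt (nlev c (l - 1)) * gN (l - 1)) * hps
    · exfalso; omega
  refine ⟨fun v => gN v.1.val, ?_, ?_⟩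
  · -- nonvanishing
    intro hzero
    obtain ⟨l0, hl0⟩ := Function.ne_iff.mp hf0
    have hl0k : (l0 : ℕ) < k := l0.isLt
    set v0 : BTVert k c := ⟨l0, fun i => ⟨0, by
      have h1 := i.isLt
      have h2 := l0.isLt
      exact hc i.val (by omega)⟩⟩ with hv0
    have h1 : gN (l0 : ℕ) = 0 := by
      have := congrFun hzero v0
      simpa using this
    rw [hgN] at h1
    have h2 : fN (l0 : ℕ) = f l0 := dif_pos hl0k
    rw [h2] at h1
    have h3 : ((-1 : ℝ) ^ (l0 : ℕ)) ≠ 0 := pow_ne_zero _ (by norm_num)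
    have h4 := (hnl (l0 : ℕ) hl0k).ne'
    rcases div_eq_zero_iff.mp h1 with h5 | h5
    · rcases mul_eq_zero.mp h5 with h6 | h6
      · exact h3 h6
      · exact hl0 h6
    · exact h4 h5
  · -- the eigen-equation
    funext v
    have hvk := v.1.isLt
    rw [SimpleGraph.lapMatrix_mulVec_apply]
    simp only [Pi.smul_apply, smul_eq_mul]
    have hdeg : (btGraph k c).degree v
        = (Finset.univ.filter fun u => IsParentOf u v).card
          + (Finset.univ.filter fun u => IsParentOf v u).card := by
      rw [← Finset.card_union_of_disjoint (disj_pc v), ← neighborFinset_eq v]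
      rfl
    rw [hdeg, neighborFinset_eq v, Finset.sum_union (disj_pc v)]
    have G := geq v.1.val v.1.isLt
    by_cases h0 : 0 < v.1.val <;> by_cases h1 : v.1.val + 1 < k
    · rw [parent_filter_pos v h0, child_filter_pos v h1, Finset.sum_singleton,
        Finset.card_singleton, Finset.sum_image (fun a _ b _ h => childV_injective v h1 h),
        Finset.card_image_of_injective _ (childV_injective v h1)]
      simp only [childV_fst, parentV_fst, Finset.sum_const, Finset.card_univ,
        Fintype.card_fin, nsmul_eq_mul]
      rw [if_pos h0, if_pos h1] at G
      have hbd : (branchDeg k c v.1.val : ℝ) = 1 + (c v.1.val : ℝ) := by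
        unfold branchDeg
        rw [if_neg (by omega), if_neg (by omega)]
        push_cast
        ring
      rw [hbd] at G
      push_cast
      linarith [G]
    · rw [parent_filter_pos v h0, child_filter_top v h1, Finset.sum_singleton,
        Finset.card_singleton, Finset.sum_empty, Finset.card_empty]
      simp only [parentV_fst]
      rw [if_pos h0, if_neg h1] at G
      have hbd : (branchDeg k c v.1.val : ℝ) = 1 := by
        unfold branchDeg
        rw [if_neg (by omega), if_pos (by omega : v.1.val = k - 1)]
        norm_num
      rw [hbd] at G
      push_cast
      linarith [G]
    · rw [parent_filter_zero v h0, child_filter_pos v h1, Finset.sum_empty,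
        Finset.card_empty, Finset.sum_image (fun a _ b _ h => childV_injective v h1 h),
        Finset.card_image_of_injective _ (childV_injective v h1)]
      simp only [childV_fst, Finset.sum_const, Finset.card_univ, Fintype.card_fin,
        nsmul_eq_mul]
      rw [if_neg h0, if_pos h1] at G
      have hl0 : v.1.val = 0 := by omega
      rw [hl0] at G ⊢
      have hbd : (branchDeg k c 0 : ℝ) = (c 0 : ℝ) := by simp [branchDeg]
      rw [hbd] at G
      push_cast
      linarith [G]
    · exfalso; omega
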